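/- Let g : [0,∞) × Ω → ℝ be jointly measurable with g_s integrable for each s and ∫_0^t E|g_s| ds < ∞ for every t ≥ 0, and let h : [0,∞) × Ω → ℝ be jointly measurable and such that for (Lebesgue-)almost every s, h_s is a version of E[g_s | G_s]. Then the process M_t := E[ ∫_0^t g_s ds | G_t ] − ∫_0^t h_s ds has the G-martingale property: for all 0 ≤ t′ ≤ t, E[M_t | G_{t′}] = M_{t′} almost surely. (This is the claim, proved in the paper's Theorem on the semimartingale representation of the optimal filter, that E(∫_0^t 𝓛f(θ_s) ds | G_t) − ∫_0^t π_s(𝓛f) ds is a G_t-martingale.) -/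

import Mathlib

open MeasureTheory

open Filter Set Topology
open scoped ENNReal NNReal

set_option linter.unusedSectionVars false

namespace CondexpSlice

variable {Ω : Type*}

/-- The product σ-algebra of the Borel σ-algebra on `ℝ` and a σ-algebra `𝔪` on `Ω`. -/
def pm (𝔪 : MeasurableSpace Ω) : MeasurableSpace (ℝ × Ω) :=
  MeasurableSpace.prod (inferInstance : MeasurableSpace ℝ) 𝔪

lemma pm_le {m 𝔪 : MeasurableSpace Ω} (h𝔪 : 𝔪 ≤ m) :
    pm 𝔪 ≤ (Prod.instMeasurableSpace (m₁ := inferInstance) (m₂ := m) :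
      MeasurableSpace (ℝ × Ω)) :=
  sup_le_sup le_rfl (MeasurableSpace.comap_mono h𝔪)

lemma pm_eq_inst (𝔪 : MeasurableSpace Ω) :
    pm 𝔪 = (Prod.instMeasurableSpace (m₁ := inferInstance) (m₂ := 𝔪)) := rfl

lemma integral_section_stronglyMeasurable [mΩ : MeasurableSpace Ω]
    (ν : Measure ℝ) [SFinite ν] {W : ℝ × Ω → ℝ} (hW : StronglyMeasurable W) :
    StronglyMeasurable fun ω => ∫ s, W (s, ω) ∂ν :=
  hW.integral_prod_left'

variable {𝔪 : MeasurableSpace Ω} {m : MeasurableSpace Ω} {μ : Measure Ω} [IsFiniteMeasure μ]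
  {ν : Measure ℝ} [IsFiniteMeasure ν]

/-- The conclusion of the slicing lemma for a given `f`. -/
def P (μ : Measure Ω) (ν : Measure ℝ) (f : ℝ × Ω → ℝ) : Prop :=
  ∀ᵐ s ∂ν, (fun ω => ((ν.prod μ)[f | pm 𝔪]) (s, ω)) =ᵐ[μ] μ[(fun ω => f (s, ω)) | 𝔪]

lemma P_congr {f g : ℝ × Ω → ℝ} (h : f =ᵐ[ν.prod μ] g) (hf : P (𝔪 := 𝔪) μ ν f) : P (𝔪 := 𝔪) μ ν g := by
  have h1 : (ν.prod μ)[f|pm 𝔪] =ᵐ[ν.prod μ] (ν.prod μ)[g|pm 𝔪] := condExp_congr_ae h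
  have h2 := Measure.ae_ae_of_ae_prod h1
  have h3 := Measure.ae_ae_of_ae_prod h
  filter_upwards [h2, h3, hf] with s hs2 hs3 hsf
  exact (EventuallyEq.symm hs2).trans (hsf.trans (condExp_congr_ae hs3))

lemma P_zero : P (𝔪 := 𝔪) μ ν (0 : ℝ × Ω → ℝ) := by
  have h1 : (ν.prod μ)[(0 : ℝ × Ω → ℝ)|pm 𝔪] = 0 := condExp_zero
  refine Eventually.of_forall fun s => ?_
  rw [h1]
  have h2 : μ[(fun ω => (0 : ℝ × Ω → ℝ) (s, ω))|𝔪] = 0 := condExp_zero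
  rw [h2]
  rfl

lemma P_add {f g : ℝ × Ω → ℝ} (hfi : Integrable f (ν.prod μ)) (hgi : Integrable g (ν.prod μ))
    (hf : P (𝔪 := 𝔪) μ ν f) (hg : P (𝔪 := 𝔪) μ ν g) : P (𝔪 := 𝔪) μ ν (f + g) := by
  have h1 : (ν.prod μ)[f + g|pm 𝔪] =ᵐ[ν.prod μ] (ν.prod μ)[f|pm 𝔪] + (ν.prod μ)[g|pm 𝔪] :=
    condExp_add hfi hgi _
  have h2 := Measure.ae_ae_of_ae_prod h1
  filter_upwards [h2, hf, hg, hfi.prod_right_ae, hgi.prod_right_ae] with s hs2 hsf hsg hfs hgs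
  have h3 : μ[(fun ω => f (s, ω)) + (fun ω => g (s, ω))|𝔪] =ᵐ[μ]
      μ[(fun ω => f (s, ω))|𝔪] + μ[(fun ω => g (s, ω))|𝔪] := condExp_add hfs hgs _
  have hs2' : (fun ω => ((ν.prod μ)[f + g|pm 𝔪]) (s, ω)) =ᵐ[μ]
      fun ω => ((ν.prod μ)[f|pm 𝔪]) (s, ω) + ((ν.prod μ)[g|pm 𝔪]) (s, ω) := hs2
  exact hs2'.trans ((hsf.add hsg).trans h3.symm)

lemma P_sub {f g : ℝ × Ω → ℝ} (hfi : Integrable f (ν.prod μ)) (hgi : Integrable g (ν.prod μ))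
    (hf : P (𝔪 := 𝔪) μ ν f) (hg : P (𝔪 := 𝔪) μ ν g) : P (𝔪 := 𝔪) μ ν (f - g) := by
  have h1 : (ν.prod μ)[f - g|pm 𝔪] =ᵐ[ν.prod μ] (ν.prod μ)[f|pm 𝔪] - (ν.prod μ)[g|pm 𝔪] :=
    condExp_sub hfi hgi _
  have h2 := Measure.ae_ae_of_ae_prod h1
  filter_upwards [h2, hf, hg, hfi.prod_right_ae, hgi.prod_right_ae] with s hs2 hsf hsg hfs hgs
  have h3 : μ[(fun ω => f (s, ω)) - (fun ω => g (s, ω))|𝔪] =ᵐ[μ]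
      μ[(fun ω => f (s, ω))|𝔪] - μ[(fun ω => g (s, ω))|𝔪] := condExp_sub hfs hgs _
  have hs2' : (fun ω => ((ν.prod μ)[f - g|pm 𝔪]) (s, ω)) =ᵐ[μ]
      fun ω => ((ν.prod μ)[f|pm 𝔪]) (s, ω) - ((ν.prod μ)[g|pm 𝔪]) (s, ω) := hs2
  exact hs2'.trans ((hsf.sub hsg).trans h3.symm)


lemma P_rect (h𝔪 : 𝔪 ≤ m) {I : Set ℝ} {B : Set Ω} (hI : MeasurableSet I)
    (hB : MeasurableSet[m] B) (c : ℝ) :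
    P (𝔪 := 𝔪) μ ν ((I ×ˢ B).indicator fun _ => c) := by
  set π : Measure (ℝ × Ω) := ν.prod μ with hπ
  set k : Ω → ℝ := μ[B.indicator (fun _ => c)|𝔪] with hk
  set cand : ℝ × Ω → ℝ := fun p => I.indicator (fun _ => (1 : ℝ)) p.1 * k p.2 with hcand
  have hBint : Integrable (B.indicator fun _ => c) μ := (integrable_const c).indicator hB
  have hind_int : Integrable ((I ×ˢ B).indicator fun _ => c) π :=
    (integrable_const c).indicator (hI.prod hB)
  have hfst : Measurable[pm 𝔪] (Prod.fst : ℝ × Ω → ℝ) := @measurable_fst ℝ Ω _ 𝔪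
  have hsnd : @Measurable (ℝ × Ω) Ω (pm 𝔪) 𝔪 Prod.snd := @measurable_snd ℝ Ω _ 𝔪
  have hcand_meas : StronglyMeasurable[pm 𝔪] cand := by
    refine StronglyMeasurable.mul ?_ ?_
    · exact (((measurable_const (a := (1:ℝ))).indicator hI).comp hfst).stronglyMeasurable
    · exact (stronglyMeasurable_condExp (f := B.indicator fun _ => c)).comp_measurable hsnd
  have hcand_int : Integrable cand π := Integrable.mul_prod ((integrable_const 1).indicator hI)
    integrable_condExp
  -- section helpers
  have hsec : ∀ (F : ℝ × Ω → ℝ) (C : Set (ℝ × Ω)) (s : ℝ) (ω : Ω),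
      C.indicator F (s, ω) = (Prod.mk s ⁻¹' C).indicator (fun ω => F (s, ω)) ω := by
    intro F C s ω
    rfl
  have hrect : ∀ (s : ℝ) (ω : Ω),
      (I ×ˢ B).indicator (fun _ => c) (s, ω) = I.indicator (fun _ => (1:ℝ)) s *
        B.indicator (fun _ => c) ω := by
    intro s ω
    by_cases hs : s ∈ I <;> by_cases hw : ω ∈ B <;>
      simp [Set.indicator_apply, Set.mem_prod, hs, hw]
  have hcond : cand =ᵐ[π] π[(I ×ˢ B).indicator (fun _ => c)|pm 𝔪] := by
    refine ae_eq_condExp_of_forall_setIntegral_eq (pm_le h𝔪) hind_int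
      (fun C _ _ => hcand_int.integrableOn) (fun C hC _ => ?_)
      hcand_meas.aestronglyMeasurable
    have hCm : MeasurableSet C := pm_le h𝔪 _ hC
    rw [← integral_indicator hCm, ← integral_indicator hCm, hπ,
      integral_prod _ (hcand_int.indicator hCm), integral_prod _ (hind_int.indicator hCm)]
    refine integral_congr_ae (Eventually.of_forall fun s => ?_)
    have hCs : MeasurableSet[𝔪] (Prod.mk s ⁻¹' C) := @measurable_prodMk_left ℝ Ω _ 𝔪 s C hC
    have hCsm : MeasurableSet (Prod.mk s ⁻¹' C) := h𝔪 _ hCs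
    have hL : ∀ ω : Ω, C.indicator cand (s, ω) =
        (Prod.mk s ⁻¹' C).indicator (fun ω => I.indicator (fun _ => (1:ℝ)) s * k ω) ω :=
      fun ω => hsec _ _ _ _
    have hR : ∀ ω : Ω, C.indicator ((I ×ˢ B).indicator fun _ => c) (s, ω) =
        (Prod.mk s ⁻¹' C).indicator
          (fun ω => I.indicator (fun _ => (1:ℝ)) s * B.indicator (fun _ => c) ω) ω := by
      intro ω
      by_cases hω : (s, ω) ∈ C
      · have hω' : ω ∈ Prod.mk s ⁻¹' C := Set.mem_preimage.mpr hω
        rw [Set.indicator_of_mem hω, Set.indicator_of_mem hω', hrect]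
      · have hω' : ω ∉ Prod.mk s ⁻¹' C := fun h => hω (Set.mem_preimage.mp h)
        rw [Set.indicator_of_notMem hω, Set.indicator_of_notMem hω']
    simp only [hL, hR]
    rw [integral_indicator hCsm, integral_indicator hCsm, integral_const_mul, integral_const_mul]
    congr 1
    exact setIntegral_condExp h𝔪 hBint hCs
  have hslice := Measure.ae_ae_of_ae_prod hcond
  filter_upwards [hslice] with s hs
  have hs' : (fun ω => (π[(I ×ˢ B).indicator (fun _ => c)|pm 𝔪]) (s, ω)) =ᵐ[μ]
      fun ω => cand (s, ω) := EventuallyEq.symm hs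
  by_cases hsI : s ∈ I
  · have h1 : (fun ω => ((I ×ˢ B).indicator (fun _ => c)) (s, ω)) = B.indicator fun _ => c := by
      funext ω; rw [hrect, Set.indicator_of_mem hsI]; ring_nf
    rw [h1]
    refine hs'.trans ?_
    have : (fun ω => cand (s, ω)) = k := by
      funext ω
      show I.indicator (fun _ => (1:ℝ)) s * k ω = k ω
      rw [Set.indicator_of_mem hsI]; ring
    rw [this]
  · have h1 : (fun ω => ((I ×ˢ B).indicator (fun _ => c)) (s, ω)) = fun _ => (0 : ℝ) := by
      funext ω; rw [hrect, Set.indicator_of_notMem hsI]; ring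
    rw [h1]
    have h2 : μ[(fun _ : Ω => (0:ℝ))|𝔪] = 0 := condExp_zero
    rw [h2]
    refine hs'.trans ?_
    have : (fun ω => cand (s, ω)) = fun _ => (0:ℝ) := by
      funext ω
      show I.indicator (fun _ => (1:ℝ)) s * k ω = 0
      rw [Set.indicator_of_notMem hsI]; ring
    rw [this]
    rfl


lemma P_limit (h𝔪 : 𝔪 ≤ m) {u : ℕ → ℝ × Ω → ℝ} {f : ℝ × Ω → ℝ}
    (hui : ∀ n, Integrable (u n) (ν.prod μ)) (hfi : Integrable f (ν.prod μ))
    (hconv : Tendsto (fun n => ∫⁻ z, ‖u n z - f z‖₊ ∂(ν.prod μ)) atTop (𝓝 0))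
    (hu : ∀ n, P (𝔪 := 𝔪) μ ν (u n)) : P (𝔪 := 𝔪) μ ν f := by
  set π : Measure (ℝ × Ω) := ν.prod μ with hπ
  obtain ⟨f', hf'm, hff'⟩ : ∃ f', StronglyMeasurable f' ∧ f =ᵐ[π] f' :=
    ⟨hfi.1.mk f, hfi.1.stronglyMeasurable_mk, hfi.1.ae_eq_mk⟩
  have hmk : ∀ n, ∃ v, StronglyMeasurable v ∧ u n =ᵐ[π] v :=
    fun n => ⟨(hui n).1.mk _, (hui n).1.stronglyMeasurable_mk, (hui n).1.ae_eq_mk⟩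
  choose u' hu'm huu' using hmk
  have hui' : ∀ n, Integrable (u' n) π := fun n => (hui n).congr (huu' n)
  have hfi' : Integrable f' π := hfi.congr hff'
  have hu' : ∀ n, P (𝔪 := 𝔪) μ ν (u' n) := fun n => P_congr (huu' n) (hu n)
  have hconv' : Tendsto (fun n => ∫⁻ z, ‖u' n z - f' z‖₊ ∂π) atTop (𝓝 0) := by
    refine hconv.congr fun n => ?_
    refine lintegral_congr_ae ?_
    filter_upwards [huu' n, hff'] with z h1 h2
    rw [h1, h2]
  refine P_congr hff'.symm ?_
  have hsub : ∀ k : ℕ, ∃ n, (∫⁻ z, ‖u' n z - f' z‖₊ ∂π) < 2⁻¹ ^ k := by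
    intro k
    have hpos : (0 : ℝ≥0∞) < 2⁻¹ ^ k :=
      ENNReal.pow_pos (ENNReal.inv_pos.2 ENNReal.ofNat_ne_top) k
    exact ((tendsto_order.1 hconv').2 _ hpos).exists
  choose φ hφ using hsub
  set W : ℝ × Ω → ℝ := π[f'|pm 𝔪] with hWdef
  set Wn : ℕ → ℝ × Ω → ℝ := fun k => π[u' (φ k)|pm 𝔪] with hWndef
  have hWm : Measurable W :=
    ((stronglyMeasurable_condExp (m := pm 𝔪)).mono (pm_le h𝔪)).measurable
  have hWnm : ∀ k, Measurable (Wn k) := fun k =>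
    ((stronglyMeasurable_condExp (m := pm 𝔪)).mono (pm_le h𝔪)).measurable
  set c : ℕ → ℝ → ℝ≥0∞ := fun k s => ∫⁻ ω, ‖u' (φ k) (s, ω) - f' (s, ω)‖₊ ∂μ with hcdef
  set d : ℕ → ℝ → ℝ≥0∞ := fun k s => ∫⁻ ω, ‖Wn k (s, ω) - W (s, ω)‖₊ ∂μ with hddef
  have hcmeas : ∀ k, Measurable (c k) := fun k =>
    (((hu'm (φ k)).measurable.sub hf'm.measurable).nnnorm.coe_nnreal_ennreal).lintegral_prod_right'
  have hdmeas : ∀ k, Measurable (d k) := fun k =>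
    (((hWnm k).sub hWm).nnnorm.coe_nnreal_ennreal).lintegral_prod_right'
  have hcint : ∀ k, ∫⁻ s, c k s ∂ν ≤ 2⁻¹ ^ k := by
    intro k
    exact (lintegral_prod (μ := ν) (ν := μ) _ (((hu'm (φ k)).measurable.sub hf'm.measurable).nnnorm.coe_nnreal_ennreal).aemeasurable).symm.trans_le
      (hφ k).le
  have hdint : ∀ k, ∫⁻ s, d k s ∂ν ≤ 2⁻¹ ^ k := by
    intro k
    have h1 : (fun z => Wn k z - W z) =ᵐ[π] π[u' (φ k) - f'|pm 𝔪] :=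
      (condExp_sub (hui' (φ k)) hfi' _).symm
    calc ∫⁻ s, d k s ∂ν = ∫⁻ z, ‖Wn k z - W z‖₊ ∂π :=
          (lintegral_prod _ (((hWnm k).sub hWm).nnnorm.coe_nnreal_ennreal).aemeasurable).symm
      _ = eLpNorm (fun z => Wn k z - W z) 1 π := (eLpNorm_one_eq_lintegral_enorm (f := fun z => Wn k z - W z)).symm
      _ = eLpNorm (π[u' (φ k) - f'|pm 𝔪]) 1 π := eLpNorm_congr_ae h1
      _ ≤ eLpNorm (u' (φ k) - f') 1 π := eLpNorm_one_condExp_le_eLpNorm _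
      _ = ∫⁻ z, ‖u' (φ k) z - f' z‖₊ ∂π := eLpNorm_one_eq_lintegral_enorm (f := u' (φ k) - f')
      _ ≤ 2⁻¹ ^ k := (hφ k).le
  have htsum : ∑' k : ℕ, (∫⁻ s, c k s + d k s ∂ν) ≠ ∞ := by
    have hb : ∀ k : ℕ, (∫⁻ s, c k s + d k s ∂ν) ≤ 2 * 2⁻¹ ^ k := by
      intro k
      rw [lintegral_add_left (hcmeas k)]
      calc ∫⁻ s, c k s ∂ν + ∫⁻ s, d k s ∂ν ≤ 2⁻¹ ^ k + 2⁻¹ ^ k := add_le_add (hcint k) (hdint k)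
        _ = 2 * 2⁻¹ ^ k := (two_mul _).symm
    refine ne_top_of_le_ne_top ?_ (ENNReal.tsum_le_tsum hb)
    rw [ENNReal.tsum_mul_left, ENNReal.tsum_geometric]
    refine ENNReal.mul_ne_top (by norm_num) ?_
    rw [ENNReal.one_sub_inv_two, inv_inv]
    exact ENNReal.ofNat_ne_top
  have hae1 : ∀ᵐ s ∂ν, ∑' k : ℕ, (c k s + d k s) < ∞ := by
    refine ae_lt_top (Measurable.ennreal_tsum fun k => (hcmeas k).add (hdmeas k)) ?_
    rw [lintegral_tsum (f := fun k s => c k s + d k s) fun k => ((hcmeas k).add (hdmeas k)).aemeasurable]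
    exact htsum
  have hfsec : ∀ᵐ s ∂ν, Integrable (fun ω => f' (s, ω)) μ := hfi'.prod_right_ae
  have hP_s : ∀ᵐ s ∂ν, ∀ k : ℕ,
      (fun ω => Wn k (s, ω)) =ᵐ[μ] μ[(fun ω => u' (φ k) (s, ω))|𝔪] :=
    ae_all_iff.2 fun k => hu' (φ k)
  have hint_s : ∀ᵐ s ∂ν, ∀ k : ℕ, Integrable (fun ω => u' (φ k) (s, ω)) μ :=
    ae_all_iff.2 fun k => (hui' (φ k)).prod_right_ae
  filter_upwards [hae1, hP_s, hint_s, hfsec] with s h1 h2 h3 h4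
  set T : Ω → ℝ := μ[(fun ω => f' (s, ω))|𝔪] with hTdef
  have hTm : Measurable T := ((stronglyMeasurable_condExp (m := 𝔪)).mono h𝔪).measurable
  set D : ℝ≥0∞ := ∫⁻ ω, ‖W (s, ω) - T ω‖₊ ∂μ with hDdef
  have hbound : ∀ k, D ≤ c k s + d k s := by
    intro k
    have e1 : (fun ω => (μ[(fun ω => u' (φ k) (s, ω))|𝔪]) ω - T ω) =ᵐ[μ]
        μ[(fun ω => u' (φ k) (s, ω)) - (fun ω => f' (s, ω))|𝔪] := (condExp_sub (h3 k) h4 _).symm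
    have step1 : D ≤ (∫⁻ ω, ‖W (s, ω) - Wn k (s, ω)‖₊ ∂μ) +
        ∫⁻ ω, ‖Wn k (s, ω) - T ω‖₊ ∂μ := by
      calc D ≤ ∫⁻ ω, ((‖W (s, ω) - Wn k (s, ω)‖₊ : ℝ≥0∞) + ‖Wn k (s, ω) - T ω‖₊) ∂μ := by
            refine lintegral_mono fun ω => ?_
            have hrw : W (s, ω) - T ω = (W (s, ω) - Wn k (s, ω)) + (Wn k (s, ω) - T ω) := by
              ring
            rw [hrw, ← ENNReal.coe_add]
            exact ENNReal.coe_le_coe.2 (nnnorm_add_le _ _)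
        _ = _ := lintegral_add_left
            (((hWm.comp measurable_prodMk_left).sub
              ((hWnm k).comp measurable_prodMk_left)).nnnorm.coe_nnreal_ennreal) _
    have step2 : (∫⁻ ω, ‖W (s, ω) - Wn k (s, ω)‖₊ ∂μ) = d k s := by
      refine lintegral_congr fun ω => ?_
      rw [← nnnorm_neg, neg_sub]
    have step3 : (∫⁻ ω, ‖Wn k (s, ω) - T ω‖₊ ∂μ) ≤ c k s := by
      calc (∫⁻ ω, ‖Wn k (s, ω) - T ω‖₊ ∂μ)
          = ∫⁻ ω, ‖(μ[(fun ω => u' (φ k) (s, ω))|𝔪]) ω - T ω‖₊ ∂μ := by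
            refine lintegral_congr_ae ?_
            filter_upwards [h2 k] with ω hω
            rw [hω]
        _ = eLpNorm (μ[(fun ω => u' (φ k) (s, ω)) - (fun ω => f' (s, ω))|𝔪]) 1 μ := by
            refine Eq.trans (eLpNorm_one_eq_lintegral_enorm (f := fun ω => (μ[(fun ω => u' (φ k) (s, ω))|𝔪]) ω - T ω)).symm ?_
            exact eLpNorm_congr_ae e1
        _ ≤ eLpNorm ((fun ω => u' (φ k) (s, ω)) - (fun ω => f' (s, ω))) 1 μ :=
            eLpNorm_one_condExp_le_eLpNorm _
        _ = c k s := by rw [eLpNorm_one_eq_lintegral_enorm]; rfl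
    calc D ≤ d k s + (∫⁻ ω, ‖Wn k (s, ω) - T ω‖₊ ∂μ) := by rw [← step2]; exact step1
      _ ≤ d k s + c k s := add_le_add le_rfl step3
      _ = c k s + d k s := add_comm _ _
  have hD0 : D = 0 := by
    have h0 : Tendsto (fun k => c k s + d k s) atTop (𝓝 0) :=
      ENNReal.tendsto_atTop_zero_of_tsum_ne_top h1.ne
    exact le_antisymm (ge_of_tendsto' h0 fun k => hbound k) (by simp)
  have hae := (lintegral_eq_zero_iff
    (((hWm.comp measurable_prodMk_left).sub hTm).nnnorm.coe_nnreal_ennreal)).1 hD0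
  filter_upwards [hae] with ω hω
  have h5 : (‖W (s, ω) - T ω‖₊ : ℝ≥0∞) = 0 := hω
  have h6 : ‖W (s, ω) - T ω‖₊ = 0 := by exact_mod_cast h5
  exact sub_eq_zero.1 (nnnorm_eq_zero.1 h6)


lemma P_indicator (h𝔪 : 𝔪 ≤ m) {A : Set (ℝ × Ω)} (hA : MeasurableSet A) :
    ∀ c : ℝ, P (𝔪 := 𝔪) μ ν (A.indicator fun _ => c) := by
  refine MeasurableSpace.induction_on_inter (m := Prod.instMeasurableSpace)
    (C := fun A _ => ∀ c : ℝ, P (𝔪 := 𝔪) μ ν (A.indicator fun _ => c))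
    generateFrom_prod.symm isPiSystem_prod ?_ ?_ ?_ ?_ A hA
  · intro c
    rw [Set.indicator_empty]
    exact P_zero
  · rintro t ⟨I, hI, B, hB, rfl⟩ c
    exact P_rect h𝔪 hI hB c
  · intro t ht hPt c
    have hconst : P (𝔪 := 𝔪) μ ν (fun _ => c) := by
      have h1 : ((Set.univ ×ˢ Set.univ : Set (ℝ × Ω)).indicator fun _ => c) = fun _ => c := by
        funext z
        rw [Set.univ_prod_univ, Set.indicator_univ]
      have := P_rect (μ := μ) (ν := ν) h𝔪 MeasurableSet.univ MeasurableSet.univ c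
      rwa [h1] at this
    have h2 : tᶜ.indicator (fun _ => c) = (fun _ => c) - t.indicator fun _ => c := by
      funext z
      by_cases hz : z ∈ t
      · rw [Set.indicator_of_notMem (by simpa using hz), Pi.sub_apply,
          Set.indicator_of_mem hz]
        ring
      · rw [Set.indicator_of_mem (by simpa using hz), Pi.sub_apply,
          Set.indicator_of_notMem hz]
        ring
    rw [h2]
    exact P_sub (integrable_const c) ((integrable_const c).indicator ht) hconst (hPt c)
  · intro A hdisj hmeas hPA c
    set S : ℕ → ℝ × Ω → ℝ := fun N => ∑ j ∈ Finset.range N, (A j).indicator fun _ => c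
      with hSdef
    have hSint : ∀ N, Integrable (S N) (ν.prod μ) := fun N =>
      integrable_finset_sum' _ fun j _ => (integrable_const c).indicator (hmeas j)
    have hSP : ∀ N, P (𝔪 := 𝔪) μ ν (S N) := by
      intro N
      induction N with
      | zero => simpa [hSdef] using (P_zero (μ := μ) (𝔪 := 𝔪) (ν := ν))
      | succ n ih =>
        have : S (n + 1) = S n + (A n).indicator fun _ => c := by
          rw [hSdef]; simp [Finset.sum_range_succ]
        rw [this]
        exact P_add (hSint n) ((integrable_const c).indicator (hmeas n)) ih (hPA n c)
    have hfint : Integrable ((⋃ i, A i).indicator fun _ => c) (ν.prod μ) :=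
      (integrable_const c).indicator (MeasurableSet.iUnion hmeas)
    have key : ∀ N z, (⋃ i, A i).indicator (fun _ => c) z - S N z =
        ((⋃ i, A (N + i)).indicator (fun _ => c)) z := by
      intro N z
      by_cases hz : ∃ j, z ∈ A j
      · obtain ⟨j, hj⟩ := hz
        have huniq : ∀ i, z ∈ A i → i = j := fun i hi => by
          by_contra hne
          exact (Set.disjoint_left.mp (hdisj hne) hi) hj
        have hmem : z ∈ ⋃ i, A i := Set.mem_iUnion.2 ⟨j, hj⟩
        have hS : S N z = if j < N then c else 0 := by
          rw [hSdef]
          simp only [Finset.sum_apply]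
          by_cases hjN : j < N
          · rw [if_pos hjN, Finset.sum_eq_single_of_mem j (Finset.mem_range.2 hjN)]
            · exact Set.indicator_of_mem hj _
            · intro i _ hij
              exact Set.indicator_of_notMem (fun hzi => hij (huniq i hzi)) _
          · rw [if_neg hjN, Finset.sum_eq_zero]
            intro i hi
            exact Set.indicator_of_notMem
              (fun hzi => hjN (huniq i hzi ▸ Finset.mem_range.1 hi)) _
        have htail : z ∈ (⋃ i, A (N + i)) ↔ N ≤ j := by
          constructor
          · intro hz'
            obtain ⟨i, hi⟩ := Set.mem_iUnion.1 hz'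
            have := huniq _ hi
            omega
          · intro hNj
            exact Set.mem_iUnion.2 ⟨j - N, by rwa [Nat.add_sub_cancel' hNj]⟩
        rw [Set.indicator_of_mem hmem, hS]
        by_cases hjN : j < N
        · rw [if_pos hjN, Set.indicator_of_notMem (fun h => by
            have := htail.1 h; omega)]
          ring
        · rw [if_neg hjN, Set.indicator_of_mem (htail.2 (le_of_not_gt hjN))]
          ring
      · push_neg at hz
        have h1 : z ∉ ⋃ i, A i := fun h => by
          obtain ⟨i, hi⟩ := Set.mem_iUnion.1 h
          exact hz i hi
        have h2 : z ∉ ⋃ i, A (N + i) := fun h => by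
          obtain ⟨i, hi⟩ := Set.mem_iUnion.1 h
          exact hz (N + i) hi
        have hS : S N z = 0 := by
          rw [hSdef]
          simp only [Finset.sum_apply]
          exact Finset.sum_eq_zero fun i _ => Set.indicator_of_notMem (hz i) _
        rw [Set.indicator_of_notMem h1, hS, Set.indicator_of_notMem h2]
        ring
    refine P_limit h𝔪 hSint hfint ?_ hSP
    have heq : ∀ N, (∫⁻ z, ‖S N z - (⋃ i, A i).indicator (fun _ => c) z‖₊ ∂(ν.prod μ)) =
        ‖c‖₊ * (ν.prod μ) (⋃ i, A (N + i)) := by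
      intro N
      have hpt : ∀ z, (‖S N z - (⋃ i, A i).indicator (fun _ => c) z‖₊ : ℝ≥0∞) =
          (⋃ i, A (N + i)).indicator (fun _ => (‖c‖₊ : ℝ≥0∞)) z := by
        intro z
        rw [← nnnorm_neg, neg_sub, key N z]
        by_cases hz : z ∈ ⋃ i, A (N + i)
        · rw [Set.indicator_of_mem hz, Set.indicator_of_mem hz]
        · rw [Set.indicator_of_notMem hz, Set.indicator_of_notMem hz]
          simp
      rw [lintegral_congr hpt, lintegral_indicator (MeasurableSet.iUnion fun i => hmeas (N + i)),
        setLIntegral_const]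
    have hsum : (∑' i, (ν.prod μ) (A i)) ≠ ∞ := by
      rw [← measure_iUnion hdisj hmeas]
      exact measure_ne_top _ _
    have h1 : Tendsto (fun N => (ν.prod μ) (⋃ i, A (N + i))) atTop (𝓝 0) := by
      have h2 : Tendsto (fun N => ∑' i, (ν.prod μ) (A (i + N))) atTop (𝓝 0) :=
        ENNReal.tendsto_sum_nat_add _ hsum
      refine tendsto_of_tendsto_of_tendsto_of_le_of_le tendsto_const_nhds h2
        (fun N => by simp) (fun N => ?_)
      refine (measure_iUnion_le _).trans (le_of_eq ?_)
      exact tsum_congr fun i => by rw [Nat.add_comm]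
    have h3 : Tendsto (fun N => (‖c‖₊ : ℝ≥0∞) * (ν.prod μ) (⋃ i, A (N + i))) atTop (𝓝 0) := by
      have := ENNReal.Tendsto.const_mul (a := (‖c‖₊ : ℝ≥0∞)) h1
        (Or.inr ENNReal.coe_ne_top)
      simpa using this
    refine h3.congr fun N => ?_
    exact (heq N).symm

set_option synthInstance.maxHeartbeats 1000000 in
theorem condexp_slice (h𝔪 : 𝔪 ≤ m) {f : ℝ × Ω → ℝ} (hf : Integrable f (ν.prod μ)) :
    P (𝔪 := 𝔪) μ ν f := by
  refine Integrable.induction (P := P (𝔪 := 𝔪) μ ν) ?_ ?_ ?_ ?_ hf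
  · intro c A hA _
    exact P_indicator h𝔪 hA c
  · intro f g _ hfi hgi hPf hPg
    exact P_add hfi hgi hPf hPg
  · refine IsSeqClosed.isClosed ?_
    intro u f hu huf
    refine P_limit h𝔪 (fun n => L1.integrable_coeFn (u n)) (L1.integrable_coeFn f) ?_ hu
    have hnorm : Tendsto (fun n => ‖u n - f‖) atTop (𝓝 0) :=
      tendsto_iff_norm_sub_tendsto_zero.1 huf
    have h2 : Tendsto (fun n => ENNReal.ofReal ‖u n - f‖) atTop (𝓝 0) := by
      have := ENNReal.tendsto_ofReal hnorm
      simpa using this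
    refine h2.congr fun n => ?_
    calc ENNReal.ofReal ‖u n - f‖ = eLpNorm (↑(u n - f) : ℝ × Ω → ℝ) 1 (ν.prod μ) := by
          rw [Lp.norm_def, ENNReal.ofReal_toReal (Lp.eLpNorm_ne_top _)]
      _ = eLpNorm ((↑(u n) : ℝ × Ω → ℝ) - ↑f) 1 (ν.prod μ) :=
          eLpNorm_congr_ae (Lp.coeFn_sub _ _)
      _ = ∫⁻ z, ‖(↑(u n) : ℝ × Ω → ℝ) z - (↑f : ℝ × Ω → ℝ) z‖₊ ∂(ν.prod μ) :=
          eLpNorm_one_eq_lintegral_enorm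
  · intro f g hfg hfi hPf
    exact P_congr hfg hPf

end CondexpSlice

/-- If `g` is jointly measurable with `gₛ` integrable and `∫₀ᵗ E|gₛ| ds < ∞`, and `hₛ`
is a version of `E[gₛ | G_s]` for a.e. `s ≥ 0`, then
`M_t := E[∫₀ᵗ gₛ ds | G_t] − ∫₀ᵗ hₛ ds` has the `G`-martingale property. -/
theorem condexp_integral_sub_integral_condexp_martingale
    {Ω : Type*} {m : MeasurableSpace Ω} (μ : Measure Ω) [IsProbabilityMeasure μ]
    (G : ℝ → MeasurableSpace Ω)
    (hG_le : ∀ t, G t ≤ m)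
    (hG_mono : ∀ s t, s ≤ t → G s ≤ G t)
    (g h : ℝ → Ω → ℝ)
    (hg_meas : Measurable (Function.uncurry g))
    (hg_int : ∀ s, 0 ≤ s → Integrable (g s) μ)
    (hg_int2 : ∀ t, 0 ≤ t → (∫⁻ s in Set.Ioc (0:ℝ) t, ∫⁻ ω, ‖g s ω‖₊ ∂μ) < ⊤)
    (hh_meas : Measurable (Function.uncurry h))
    (hh_ver : ∀ᵐ s ∂(volume : Measure ℝ), 0 ≤ s → h s =ᵐ[μ] μ[g s | G s])
    (M : ℝ → Ω → ℝ)
    (hM : ∀ t, 0 ≤ t →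
      M t =ᵐ[μ] fun ω =>
        (μ[fun ω' => ∫ s in (0:ℝ)..t, g s ω' | G t]) ω - ∫ s in (0:ℝ)..t, h s ω) :
    ∀ t' t, 0 ≤ t' → t' ≤ t → μ[M t | G t'] =ᵐ[μ] M t' := by
  intro t' t ht'0 htt'
  have h0t : (0:ℝ) ≤ t := le_trans ht'0 htt'
  -- finite restricted measures
  have hfin : ∀ a b : ℝ, IsFiniteMeasure (volume.restrict (Set.Ioc a b)) := by
    intro a b
    constructor
    rw [Measure.restrict_apply_univ, Real.volume_Ioc]
    exact ENNReal.ofReal_lt_top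
  haveI := hfin 0 t
  haveI := hfin 0 t'
  haveI := hfin t' t
  -- integrability of g on products
  have hgprod : ∀ I : Set ℝ, MeasurableSet I → I ⊆ Set.Ioc 0 t →
      Integrable (Function.uncurry g) ((volume.restrict I).prod μ) := by
    intro I hI hsub
    haveI : IsFiniteMeasure (volume.restrict I) :=
      ⟨by
        rw [Measure.restrict_apply_univ]
        exact lt_of_le_of_lt (measure_mono hsub) (by rw [Real.volume_Ioc]; exact ENNReal.ofReal_lt_top)⟩
    refine ⟨hg_meas.aestronglyMeasurable, ?_⟩
    show (∫⁻ z, ‖Function.uncurry g z‖₊ ∂((volume.restrict I).prod μ)) < ⊤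
    rw [lintegral_prod _ hg_meas.nnnorm.coe_nnreal_ennreal.aemeasurable]
    refine lt_of_le_of_lt ?_ (hg_int2 t h0t)
    exact lintegral_mono' (Measure.restrict_mono hsub le_rfl) le_rfl
  -- a.e. properties of s under restricted measures
  have hh_ae : ∀ I : Set ℝ, MeasurableSet I → I ⊆ Set.Ioc 0 t →
      ∀ᵐ s ∂(volume.restrict I), (h s =ᵐ[μ] μ[g s | G s]) ∧ s ∈ I := by
    intro I hI hsub
    filter_upwards [ae_restrict_of_ae hh_ver, ae_restrict_mem hI] with s hs1 hs2
    exact ⟨hs1 (le_of_lt (hsub hs2).1), hs2⟩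
  -- integrability of h on products
  have hhprod : ∀ I : Set ℝ, MeasurableSet I → I ⊆ Set.Ioc 0 t →
      Integrable (Function.uncurry h) ((volume.restrict I).prod μ) := by
    intro I hI hsub
    refine ⟨hh_meas.aestronglyMeasurable, ?_⟩
    show (∫⁻ z, ‖Function.uncurry h z‖₊ ∂((volume.restrict I).prod μ)) < ⊤
    rw [lintegral_prod _ hh_meas.nnnorm.coe_nnreal_ennreal.aemeasurable]
    have hb : ∀ᵐ s ∂(volume.restrict I), (∫⁻ ω, ‖h s ω‖₊ ∂μ) ≤ ∫⁻ ω, ‖g s ω‖₊ ∂μ := by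
      filter_upwards [hh_ae I hI hsub] with s hs
      have h1 : (∫⁻ ω, ‖h s ω‖₊ ∂μ) = ∫⁻ ω, ‖(μ[g s | G s]) ω‖₊ ∂μ := by
        refine lintegral_congr_ae ?_
        filter_upwards [hs.1] with ω hω
        rw [hω]
      have h0s : (0:ℝ) ≤ s := le_of_lt (hsub hs.2).1
      calc (∫⁻ ω, ‖h s ω‖₊ ∂μ) = eLpNorm (μ[g s | G s]) 1 μ := by
            rw [h1, eLpNorm_one_eq_lintegral_enorm]; rfl
        _ ≤ eLpNorm (g s) 1 μ := eLpNorm_one_condExp_le_eLpNorm _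
        _ = ∫⁻ ω, ‖g s ω‖₊ ∂μ := eLpNorm_one_eq_lintegral_enorm
    calc (∫⁻ s, ∫⁻ ω, ‖Function.uncurry h (s, ω)‖₊ ∂μ ∂(volume.restrict I))
        ≤ ∫⁻ s, ∫⁻ ω, ‖g s ω‖₊ ∂μ ∂(volume.restrict I) := lintegral_mono_ae hb
      _ ≤ ∫⁻ s in Set.Ioc (0:ℝ) t, ∫⁻ ω, ‖g s ω‖₊ ∂μ :=
          lintegral_mono' (Measure.restrict_mono hsub le_rfl) le_rfl
      _ < ⊤ := hg_int2 t h0t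
  have hsub1 : Set.Ioc (0:ℝ) t' ⊆ Set.Ioc 0 t := Set.Ioc_subset_Ioc le_rfl htt'
  have hsub2 : Set.Ioc t' t ⊆ Set.Ioc 0 t := Set.Ioc_subset_Ioc ht'0 le_rfl
  -- abbreviations
  set Ag : Ω → ℝ := fun ω => ∫ s in Set.Ioc (0:ℝ) t, g s ω with hAg
  set Ag' : Ω → ℝ := fun ω => ∫ s in Set.Ioc (0:ℝ) t', g s ω with hAg'
  set Ag'' : Ω → ℝ := fun ω => ∫ s in Set.Ioc t' t, g s ω with hAg''
  set Ah : Ω → ℝ := fun ω => ∫ s in Set.Ioc (0:ℝ) t, h s ω with hAh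
  set Ah' : Ω → ℝ := fun ω => ∫ s in Set.Ioc (0:ℝ) t', h s ω with hAh'
  set Ah'' : Ω → ℝ := fun ω => ∫ s in Set.Ioc t' t, h s ω with hAh''
  have hAg_int : Integrable Ag μ :=
    (hgprod _ measurableSet_Ioc (subset_refl _)).integral_prod_right
  have hAg'_int : Integrable Ag' μ := (hgprod _ measurableSet_Ioc hsub1).integral_prod_right
  have hAg''_int : Integrable Ag'' μ := (hgprod _ measurableSet_Ioc hsub2).integral_prod_right
  have hAh_int : Integrable Ah μ :=
    (hhprod _ measurableSet_Ioc (subset_refl _)).integral_prod_right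
  have hAh'_int : Integrable Ah' μ := (hhprod _ measurableSet_Ioc hsub1).integral_prod_right
  have hAh''_int : Integrable Ah'' μ := (hhprod _ measurableSet_Ioc hsub2).integral_prod_right
  -- splitting the integrals
  have hdisjI : Disjoint (Set.Ioc (0:ℝ) t') (Set.Ioc t' t) := by
    rw [Set.disjoint_left]
    intro x hx1 hx2
    exact absurd hx2.1 (not_lt.2 hx1.2)
  have hsplit : ∀ (F : ℝ → Ω → ℝ), Integrable (Function.uncurry F)
      ((volume.restrict (Set.Ioc (0:ℝ) t)).prod μ) →
      ∀ᵐ ω ∂μ, (∫ s in Set.Ioc (0:ℝ) t, F s ω) =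
        (∫ s in Set.Ioc (0:ℝ) t', F s ω) + ∫ s in Set.Ioc t' t, F s ω := by
    intro F hF
    filter_upwards [hF.prod_left_ae] with ω hω
    have hω' : IntegrableOn (fun s => F s ω) (Set.Ioc (0:ℝ) t) volume := hω
    rw [← Set.Ioc_union_Ioc_eq_Ioc ht'0 htt',
      setIntegral_union hdisjI measurableSet_Ioc
        (hω'.mono_set (by rw [← Set.Ioc_union_Ioc_eq_Ioc ht'0 htt']; exact Set.subset_union_left))
        (hω'.mono_set (by rw [← Set.Ioc_union_Ioc_eq_Ioc ht'0 htt']; exact Set.subset_union_right))]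
  have hgsplit : ∀ᵐ ω ∂μ, Ag ω = Ag' ω + Ag'' ω :=
    hsplit g (hgprod _ measurableSet_Ioc (subset_refl _))
  have hhsplit : ∀ᵐ ω ∂μ, Ah ω = Ah' ω + Ah'' ω :=
    hsplit h (hhprod _ measurableSet_Ioc (subset_refl _))
  -- rewrite hM in terms of set integrals
  have hMt : M t =ᵐ[μ] fun ω => (μ[Ag | G t]) ω - Ah ω := by
    have e1 : (fun ω' => ∫ s in (0:ℝ)..t, g s ω') = Ag := by
      funext ω'
      rw [intervalIntegral.integral_of_le h0t, hAg]
    filter_upwards [hM t h0t] with ω hω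
    rw [hω, e1, intervalIntegral.integral_of_le h0t]
  have hMt' : M t' =ᵐ[μ] fun ω => (μ[Ag' | G t']) ω - Ah' ω := by
    have e1 : (fun ω' => ∫ s in (0:ℝ)..t', g s ω') = Ag' := by
      funext ω'
      rw [intervalIntegral.integral_of_le ht'0, hAg']
    filter_upwards [hM t' ht'0] with ω hω
    rw [hω, e1, intervalIntegral.integral_of_le ht'0]
  -- Fubini-type swap for set integrals
  have hswapint : ∀ (F : ℝ → Ω → ℝ), Integrable (Function.uncurry F)
      ((volume.restrict (Set.Ioc t' t)).prod μ) → ∀ S : Set Ω, MeasurableSet S →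
      (∫ ω in S, (∫ s in Set.Ioc t' t, F s ω) ∂μ) =
        ∫ s in Set.Ioc t' t, (∫ ω in S, F s ω ∂μ) := by
    intro F hF S hS
    have h1 : (volume.restrict (Set.Ioc t' t)).prod (μ.restrict S) =
        ((volume.restrict (Set.Ioc t' t)).prod μ).restrict (Set.univ ×ˢ S) := by
      rw [← Measure.prod_restrict, Measure.restrict_univ]
    have h2 : Integrable (Function.uncurry F)
        ((volume.restrict (Set.Ioc t' t)).prod (μ.restrict S)) := by
      rw [h1]
      exact hF.restrict
    exact integral_integral_swap (f := fun ω s => F s ω)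
      (μ := μ.restrict S) (ν := volume.restrict (Set.Ioc t' t)) h2.swap
  -- Part 1: the conditional expectations of the tail integrals agree
  have hC1 : μ[fun ω => Ag'' ω - Ah'' ω | G t'] =ᵐ[μ] 0 := by
    refine (ae_eq_condExp_of_forall_setIntegral_eq (hG_le t')
      (hAg''_int.sub hAh''_int)
      (fun S hS hμS => (integrable_zero _ _ _).integrableOn)
      (fun S hS hμS => ?_) ?_).symm
    · have hSm : MeasurableSet S := hG_le t' _ hS
      simp only [Pi.zero_apply, integral_zero]
      simp only [Pi.sub_apply]
      have e1 : (∫ ω in S, (Ag'' ω - Ah'' ω) ∂μ) =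
          (∫ ω in S, Ag'' ω ∂μ) - ∫ ω in S, Ah'' ω ∂μ :=
        integral_sub hAg''_int.integrableOn hAh''_int.integrableOn
      rw [e1, hswapint g (hgprod _ measurableSet_Ioc hsub2) S hSm,
        hswapint h (hhprod _ measurableSet_Ioc hsub2) S hSm]
      have e2 : ∀ᵐ s ∂(volume.restrict (Set.Ioc t' t)),
          (∫ ω in S, g s ω ∂μ) = ∫ ω in S, h s ω ∂μ := by
        filter_upwards [hh_ae _ measurableSet_Ioc hsub2] with s hs
        have h0s : (0:ℝ) ≤ s := le_of_lt (hsub2 hs.2).1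
        have hSGs : MeasurableSet[G s] S := hG_mono t' s (le_of_lt hs.2.1) _ hS
        rw [integral_congr_ae (ae_restrict_of_ae hs.1)]
        exact (setIntegral_condExp (hG_le s) (hg_int s h0s) hSGs).symm
      rw [integral_congr_ae e2, sub_self]
    · exact StronglyMeasurable.aestronglyMeasurable
        (@stronglyMeasurable_const Ω ℝ (G t') _ 0)
  -- Part 2: Ah' is almost everywhere G t'-measurable
  have hC2 : μ[Ah' | G t'] =ᵐ[μ] Ah' := by
    set ν₁ : Measure ℝ := volume.restrict (Set.Ioc (0:ℝ) t') with hν₁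
    have hW := CondexpSlice.condexp_slice (μ := μ) (ν := ν₁) (𝔪 := G t') (hG_le t')
      (hhprod _ measurableSet_Ioc hsub1)
    set W : ℝ × Ω → ℝ := (ν₁.prod μ)[Function.uncurry h | CondexpSlice.pm (G t')] with hWdef
    have hWsm : StronglyMeasurable[CondexpSlice.pm (G t')] W := stronglyMeasurable_condExp
    have hWmeas : Measurable W := (hWsm.mono (CondexpSlice.pm_le (hG_le t'))).measurable
    have hW_h : ∀ᵐ s ∂ν₁, (fun ω => W (s, ω)) =ᵐ[μ] h s := by
      filter_upwards [hW, hh_ae _ measurableSet_Ioc hsub1] with s hs1 hs2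
      have e1 : μ[h s | G t'] =ᵐ[μ] μ[μ[g s | G s] | G t'] := condExp_congr_ae hs2.1
      have e2 : μ[μ[g s | G s] | G t'] = μ[g s | G s] :=
        condExp_of_stronglyMeasurable (hG_le t')
          ((stronglyMeasurable_condExp (m := G s)).mono (hG_mono s t' hs2.2.2))
          integrable_condExp
      have e2' : μ[μ[g s | G s] | G t'] =ᵐ[μ] μ[g s | G s] := by rw [e2]
      have hsec : (fun ω => W (s, ω)) =ᵐ[μ] μ[h s | G t'] := hs1
      exact hsec.trans ((e1.trans e2').trans hs2.1.symm)
    have hbadset : MeasurableSet {z : ℝ × Ω | W z ≠ Function.uncurry h z} :=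
      (measurableSet_eq_fun hWmeas hh_meas).compl
    have hbad : (ν₁.prod μ) {z | W z ≠ Function.uncurry h z} = 0 := by
      rw [Measure.prod_apply hbadset]
      have hz : ∀ᵐ s ∂ν₁, μ (Prod.mk s ⁻¹' {z | W z ≠ Function.uncurry h z}) = 0 := by
        filter_upwards [hW_h] with s hs
        have : ∀ᵐ ω ∂μ, W (s, ω) = h s ω := hs
        exact ae_iff.1 this
      rw [lintegral_congr_ae hz, lintegral_zero]
    have hswap0 : (μ.prod ν₁) (Prod.swap ⁻¹' {z | W z ≠ Function.uncurry h z}) = 0 := by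
      rw [← Measure.prod_swap] at hbad
      rwa [Measure.map_apply measurable_swap hbadset] at hbad
    have hae2 : ∀ᵐ ω ∂μ, ∀ᵐ s ∂ν₁, W (s, ω) = h s ω := by
      have h0 : ∀ᵐ z ∂(μ.prod ν₁), W (z.2, z.1) = Function.uncurry h (z.2, z.1) := by
        rw [ae_iff]
        exact hswap0
      exact Measure.ae_ae_of_ae_prod h0
    have hFeq : (fun ω => ∫ s, W (s, ω) ∂ν₁) =ᵐ[μ] Ah' := by
      filter_upwards [hae2] with ω hω
      exact integral_congr_ae hω
    have hFsm : StronglyMeasurable[G t'] (fun ω => ∫ s, W (s, ω) ∂ν₁) :=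
      CondexpSlice.integral_section_stronglyMeasurable (mΩ := G t') ν₁ hWsm
    have hFint : Integrable (fun ω => ∫ s, W (s, ω) ∂ν₁) μ := hAh'_int.congr hFeq.symm
    calc μ[Ah' | G t'] =ᵐ[μ] μ[fun ω => ∫ s, W (s, ω) ∂ν₁ | G t'] :=
          condExp_congr_ae hFeq.symm
      _ = fun ω => ∫ s, W (s, ω) ∂ν₁ := condExp_of_stronglyMeasurable (hG_le t') hFsm hFint
      _ =ᵐ[μ] Ah' := hFeq
  -- final assembly
  have e0 : μ[M t | G t'] =ᵐ[μ] μ[fun ω => (μ[Ag | G t]) ω - Ah ω | G t'] :=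
    condExp_congr_ae hMt
  have e1 : μ[fun ω => (μ[Ag | G t]) ω - Ah ω | G t'] =ᵐ[μ]
      μ[μ[Ag | G t] | G t'] - μ[Ah | G t'] := condExp_sub integrable_condExp hAh_int _
  have e2 : μ[μ[Ag | G t] | G t'] =ᵐ[μ] μ[Ag | G t'] :=
    condExp_condExp_of_le (hG_mono t' t htt') (hG_le t)
  have e3 : μ[Ag | G t'] =ᵐ[μ] μ[Ag' | G t'] + μ[Ag'' | G t'] :=
    (condExp_congr_ae (hgsplit : Ag =ᵐ[μ] fun ω => Ag' ω + Ag'' ω)).trans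
      (condExp_add hAg'_int hAg''_int _)
  have e4 : μ[Ah | G t'] =ᵐ[μ] μ[Ah' | G t'] + μ[Ah'' | G t'] :=
    (condExp_congr_ae (hhsplit : Ah =ᵐ[μ] fun ω => Ah' ω + Ah'' ω)).trans
      (condExp_add hAh'_int hAh''_int _)
  have e5 : μ[fun ω => Ag'' ω - Ah'' ω | G t'] =ᵐ[μ] μ[Ag'' | G t'] - μ[Ah'' | G t'] :=
    condExp_sub hAg''_int hAh''_int _
  refine ((e0.trans e1).trans ?_).trans hMt'.symm
  filter_upwards [e2, e3, e4, hC1, hC2, e5] with ω h2 h3 h4 hc1 hc2 h5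
  simp only [Pi.sub_apply, Pi.add_apply, Pi.zero_apply] at h2 h3 h4 hc1 hc2 h5 ⊢
  rw [h2, h3, h4, hc2]
  rw [h5] at hc1
  linarith [hc1]
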